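/- Let A be an N×N reaction matrix all of whose principal (N-1)×(N-1) minors ρ_{ii} are nonzero and all of the same sign (-1)^{N-1}. Then for any M > 0, the vector X_∞ with components u_{j,∞} = M ρ_{jj} / (∑_{i=1}^N ρ_{ii}) is the unique solution of the system A X_∞ = 0 together with ∑_{j=1}^N u_{j,∞} = M, and all components u_{j,∞} are positive. -/

import Mathlib

open Matrix

/-- If the principal minor at `0` is invertible, a kernel vector vanishing at `0` is zero. -/
lemma ker_zero_of_minor {N : ℕ} (A : Matrix (Fin (N + 1)) (Fin (N + 1)) ℝ)
    (h : IsUnit (A.submatrix (0 : Fin (N + 1)).succAbove (0 : Fin (N + 1)).succAbove).det)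
    (z : Fin (N + 1) → ℝ) (hz : A.mulVec z = 0) (hz0 : z 0 = 0) : z = 0 := by
  set e := (0 : Fin (N + 1)).succAbove with he
  set B := A.submatrix e e with hB
  have key : B.mulVec (z ∘ e) = 0 := by
    funext i
    have h1 : ∑ j, A (e i) j * z j = 0 := congrFun hz (e i)
    rw [Fin.sum_univ_succAbove (fun j => A (e i) j * z j) 0] at h1
    simp only [hz0, mul_zero, zero_add] at h1
    simpa [Matrix.mulVec, dotProduct, hB, he] using h1
  have hze : z ∘ e = 0 := by
    have h1 : B⁻¹ *ᵥ (B *ᵥ (z ∘ e)) = z ∘ e := by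
      rw [Matrix.mulVec_mulVec, Matrix.nonsing_inv_mul B h, Matrix.one_mulVec]
    rw [key] at h1
    simpa using h1.symm
  funext j
  rcases eq_or_ne j 0 with rfl | hj
  · exact hz0
  · obtain ⟨k, rfl⟩ := Fin.exists_succAbove_eq hj
    exact congrFun hze k

theorem unique_positive_equilibrium_of_nonzero_minors
    (N : ℕ) (A : Matrix (Fin (N + 1)) (Fin (N + 1)) ℝ)
    (hoff : ∀ i j, i ≠ j → 0 ≤ A i j)
    (hcol : ∀ j, ∑ i, A i j = 0)
    (ρ : Fin (N + 1) → ℝ)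
    (hρ : ∀ i, ρ i = (A.submatrix i.succAbove i.succAbove).det)
    (hsign : ∀ i, 0 < (-1 : ℝ) ^ N * ρ i)
    (M : ℝ) (hM : 0 < M)
    (Xinf : Fin (N + 1) → ℝ)
    (hXinf : ∀ j, Xinf j = M * ρ j / ∑ i, ρ i) :
    (∀ j, 0 < Xinf j) ∧ A.mulVec Xinf = 0 ∧ ∑ j, Xinf j = M ∧
      ∀ Y : Fin (N + 1) → ℝ, A.mulVec Y = 0 → ∑ j, Y j = M → Y = Xinf := by
  have hρ0 : ∀ i, ρ i ≠ 0 := fun i h => by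
    have := hsign i; rw [h, mul_zero] at this; exact lt_irrefl 0 this
  set s : ℝ := ∑ i, ρ i with hs
  have hssign : 0 < (-1 : ℝ) ^ N * s := by
    rw [hs, Finset.mul_sum]
    exact Finset.sum_pos (fun i _ => hsign i) Finset.univ_nonempty
  have hsne : s ≠ 0 := fun h => by
    rw [h, mul_zero] at hssign; exact lt_irrefl 0 hssign
  -- auxiliary sign facts
  have hpow : ((-1 : ℝ) ^ N) ≠ 0 := by positivity
  have hratio : ∀ j, 0 < ρ j / s := fun j => by
    have : ρ j / s = ((-1 : ℝ) ^ N * ρ j) / ((-1 : ℝ) ^ N * s) :=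
      (mul_div_mul_left _ _ hpow).symm
    rw [this]; exact div_pos (hsign j) hssign
  have hpos : ∀ j, 0 < Xinf j := fun j => by
    rw [hXinf j, mul_div_assoc]
    exact mul_pos hM (hratio j)
  -- ones is in the kernel of the transpose
  have hones : Aᵀ.mulVec (fun _ => (1 : ℝ)) = 0 := by
    funext j
    simpa [Matrix.mulVec, dotProduct] using hcol j
  -- det A = 0
  have hdet : A.det = 0 := by
    rw [← Matrix.det_transpose]
    refine Matrix.exists_mulVec_eq_zero_iff.mp ⟨fun _ => 1, ?_, hones⟩
    intro h; exact one_ne_zero (congrFun h 0)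
  -- units of minors
  have hunit : ∀ i : Fin (N + 1),
      IsUnit (A.submatrix i.succAbove i.succAbove).det := fun i => by
    rw [← hρ i]; exact (hρ0 i).isUnit
  -- adjugate has constant rows
  have hrows : ∀ i j, A.adjugate i j = A.adjugate i 0 := by
    intro i j
    have hrow : Aᵀ.mulVec (fun k => A.adjugate i k) = 0 := by
      funext c
      have := congrFun (congrFun (Matrix.adjugate_mul A) i) c
      rw [hdet] at this
      simpa [Matrix.mul_apply, Matrix.mulVec, dotProduct, Matrix.transpose_apply,
        mul_comm] using this
    have hT : IsUnit ((Aᵀ).submatrix (0 : Fin (N + 1)).succAbove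
        (0 : Fin (N + 1)).succAbove).det := by
      rw [← Matrix.transpose_submatrix, Matrix.det_transpose]
      exact hunit 0
    have := ker_zero_of_minor Aᵀ hT
      (fun k => A.adjugate i k - A.adjugate i 0 * 1)
      (by rw [show (fun k => A.adjugate i k - A.adjugate i 0 * 1)
              = (fun k => A.adjugate i k) - (A.adjugate i 0) • (fun _ => (1:ℝ)) by
            funext k; simp [mul_comm]]
          rw [Matrix.mulVec_sub, Matrix.mulVec_smul, hrow, hones]; simp)
      (by simp)
    have := congrFun this j
    simpa [sub_eq_zero] using this
  -- diagonal of adjugate is the principal minor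
  have hdiag : ∀ i, A.adjugate i i = ρ i := by
    intro i
    rw [Matrix.adjugate_apply, hρ i]
    rw [Matrix.det_succ_row _ i]
    rw [Fintype.sum_eq_single i]
    · simp [Matrix.updateRow_apply, Matrix.submatrix, Pi.single_eq_same]
    · intro j hj
      simp [Matrix.updateRow_self, Pi.single_eq_of_ne hj]
  -- A ρ = 0
  have hAρ : A.mulVec ρ = 0 := by
    funext r
    have := congrFun (congrFun (Matrix.mul_adjugate A) r) 0
    rw [hdet] at this
    have h2 : ∑ j, A r j * A.adjugate j 0 = 0 := by
      simpa [Matrix.mul_apply] using this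
    have h3 : ∀ j, A.adjugate j 0 = ρ j := fun j => by
      rw [← hrows j j, hdiag j]
    simp only [Matrix.mulVec, dotProduct, Pi.zero_apply]
    rw [← h2]
    exact Finset.sum_congr rfl fun j _ => by rw [h3 j]
  have hXρ : Xinf = (M / s) • ρ := by
    funext j; rw [hXinf j]; rw [mul_div_assoc]; simp only [Pi.smul_apply, smul_eq_mul]; ring
  have hAX : A.mulVec Xinf = 0 := by
    rw [hXρ, Matrix.mulVec_smul, hAρ]; simp
  have hsum : ∑ j, Xinf j = M := by
    simp only [hXinf, div_eq_mul_inv, ← Finset.sum_mul, ← Finset.mul_sum]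
    rw [← hs]
    field_simp
  refine ⟨hpos, hAX, hsum, ?_⟩
  intro Y hY hYsum
  have hX0 : Xinf 0 ≠ 0 := (hpos 0).ne'
  set t : ℝ := Y 0 / Xinf 0 with ht
  have hz : A.mulVec (Y - t • Xinf) = 0 := by
    rw [Matrix.mulVec_sub, Matrix.mulVec_smul, hY, hAX]; simp
  have hz0 : (Y - t • Xinf) 0 = 0 := by
    simp [ht, div_mul_cancel₀ _ hX0]
  have hzz := ker_zero_of_minor A (hunit 0) _ hz hz0
  have hYt : Y = t • Xinf := by
    funext j
    have := congrFun hzz j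
    simpa [sub_eq_zero] using this
  have hMne : M ≠ 0 := hM.ne'
  have ht1 : t = 1 := by
    have : ∑ j, Y j = t * M := by
      rw [hYt, ← hsum, Finset.mul_sum]
      exact Finset.sum_congr rfl fun j _ => by simp
    rw [hYsum] at this
    field_simp at this
    tauto
  rw [hYt, ht1, one_smul]
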